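/- Mirror descent with constant step size 1/L on an objective that is L-relatively smooth and μ-relatively strongly convex converges linearly: under the assumptions above plus convexity of f − μφ on relint C with μ > 0, the iterates satisfy f(x^k) − f* ≤ (1 − μ/L)^k · L · D_φ(x*, x^0) for all k ≥ 1. -/

import Mathlib

open scoped RealInnerProductSpace

/-- Bregman divergence of a differentiable reference function. -/
noncomputable def bregman {V : Type*} [NormedAddCommGroup V] [InnerProductSpace ℝ V]
    [CompleteSpace V] (φ : V → ℝ) (x y : V) : ℝ :=
  φ x - φ y - ⟪gradient φ y, x - y⟫

open Set Filter Topology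

section Aux

variable {V : Type*} [NormedAddCommGroup V] [InnerProductSpace ℝ V]

/-- A point strictly between a point of `C` and a point of the intrinsic interior of `C`
lies in the intrinsic interior. -/
lemma mem_relint_seg {C : Set V} (hC : Convex ℝ C) {a b : V} (ha : a ∈ C)
    (hb : b ∈ intrinsicInterior ℝ C) {t : ℝ} (ht : t ∈ Set.Ioo (0:ℝ) 1) :
    a + t • (b - a) ∈ intrinsicInterior ℝ C := by
  obtain ⟨b', hb'int, rfl⟩ := hb
  obtain ⟨ε, hε, hball⟩ := Metric.mem_nhds_iff.mp (mem_interior_iff_mem_nhds.mp hb'int)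
  have haspan : a ∈ affineSpan ℝ C := subset_affineSpan ℝ C ha
  have hbspan : (b' : V) ∈ affineSpan ℝ C := b'.2
  have hzspan : a + t • ((b' : V) - a) ∈ affineSpan ℝ C := by
    have := AffineSubspace.smul_vsub_vadd_mem (affineSpan ℝ C) t hbspan haspan haspan
    simpa [vsub_eq_sub, vadd_eq_add, add_comm] using this
  set z : V := a + t • ((b' : V) - a) with hz
  refine ⟨⟨z, hzspan⟩, ?_, rfl⟩
  rw [mem_interior]
  refine ⟨Metric.ball ⟨z, hzspan⟩ (t * ε), ?_, Metric.isOpen_ball,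
    Metric.mem_ball_self (mul_pos ht.1 hε)⟩
  rintro ⟨w, hwspan⟩ hw
  have hdist : ‖w - z‖ < t * ε := by
    simpa [Metric.mem_ball, Subtype.dist_eq, dist_eq_norm] using hw
  set u : V := (b' : V) + t⁻¹ • (w - z) with hu
  have huspan : u ∈ affineSpan ℝ C := by
    have := AffineSubspace.smul_vsub_vadd_mem (affineSpan ℝ C) t⁻¹ hwspan hzspan hbspan
    simpa [vsub_eq_sub, vadd_eq_add, add_comm] using this
  have huball : (⟨u, huspan⟩ : affineSpan ℝ C) ∈ Metric.ball b' ε := by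
    rw [Metric.mem_ball, Subtype.dist_eq, dist_eq_norm]
    have h4 : u - (b' : V) = t⁻¹ • (w - z) := by simp [hu]
    rw [h4, norm_smul, Real.norm_eq_abs, abs_of_pos (inv_pos.mpr ht.1)]
    have ht0 : t ≠ 0 := ne_of_gt ht.1
    calc t⁻¹ * ‖w - z‖ < t⁻¹ * (t * ε) := mul_lt_mul_of_pos_left hdist (inv_pos.mpr ht.1)
      _ = ε := by field_simp
  have huC : u ∈ C := hball huball
  have hwC : w ∈ C := by
    have hrep : w = a + t • (u - a) := by
      have hts : t • (u - a) = t • ((b' : V) - a) + (w - z) := by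
        rw [hu, show (b' : V) + t⁻¹ • (w - z) - a = ((b' : V) - a) + t⁻¹ • (w - z) by abel,
          smul_add, smul_smul, mul_inv_cancel₀ (ne_of_gt ht.1), one_smul]
      rw [hts, hz]; abel
    rw [hrep]
    exact hC.add_smul_sub_mem ha huC ⟨le_of_lt ht.1, le_of_lt ht.2⟩
  exact hwC

variable [CompleteSpace V]

lemma line_hasDerivAt (v d : V) : HasDerivAt (fun s : ℝ => v + s • d) d 0 := by
  simpa using ((hasDerivAt_id (0:ℝ)).smul_const d).const_add v

lemma comp_line_hasDerivAt {g : V → ℝ} {G : V} (v d : V) (hG : HasGradientAt g G v) :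
    HasDerivAt (fun t : ℝ => g (v + t • d)) ⟪G, d⟫ 0 := by
  have h2 : HasFDerivAt g (InnerProductSpace.toDual ℝ V G) (v + (0:ℝ) • d) := by
    simpa using hasGradientAt_iff_hasFDerivAt.mp hG
  have h3 := h2.comp_hasDerivAt 0 (line_hasDerivAt v d)
  exact h3

/-- Gradient inequality for a function convex on `S`, where the far endpoint `u` need not lie
in `S` but the open segment from `v` to `u` does. -/
lemma grad_ineq {S : Set V} {g : V → ℝ} {u v G : V} (hgc : Continuous g)
    (hconv : ConvexOn ℝ S g) (hG : HasGradientAt g G v) (hv : v ∈ S)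
    (hseg : ∀ t : ℝ, t ∈ Set.Ioo (0:ℝ) 1 → v + t • (u - v) ∈ S) :
    g v + ⟪G, u - v⟫ ≤ g u := by
  set h : ℝ → ℝ := fun t => g (v + t • (u - v)) with hh
  have h0 : h 0 = g v := by simp [hh]
  have h1 : h 1 = g u := by simp [hh]
  have hd : HasDerivAt h ⟪G, u - v⟫ 0 := comp_line_hasDerivAt v (u - v) hG
  have key : ∀ t ∈ Set.Ioo (0:ℝ) 1, h t ≤ h 0 + t * (g u - h 0) := by
    intro t ht
    have hcont : Tendsto h (𝓝[<] (1:ℝ)) (𝓝 (g u)) := by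
      have : ContinuousAt h 1 := (hgc.comp (by continuity)).continuousAt
      rw [← h1]
      exact this.continuousWithinAt.tendsto
    have htend : Tendsto (fun s : ℝ => (1 - t / s) * h 0 + (t / s) * h s) (𝓝[<] (1:ℝ))
        (𝓝 ((1 - t) * h 0 + t * g u)) := by
      have hs1 : Tendsto (fun s : ℝ => s) (𝓝[<] (1:ℝ)) (𝓝 1) :=
        tendsto_id.mono_left nhdsWithin_le_nhds
      have hts : Tendsto (fun s : ℝ => t / s) (𝓝[<] (1:ℝ)) (𝓝 t) := by
        have h3 := (tendsto_const_nhds (x := t)).div hs1 one_ne_zero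
        simp only [div_one] at h3
        exact h3
      exact ((tendsto_const_nhds.sub hts).mul tendsto_const_nhds).add (hts.mul hcont)
    have hev : ∀ᶠ s in 𝓝[<] (1:ℝ), h t ≤ (1 - t / s) * h 0 + (t / s) * h s := by
      filter_upwards [Ioo_mem_nhdsLT_of_mem (show (1:ℝ) ∈ Set.Ioc t 1 from ⟨ht.2, le_refl _⟩)]
        with s hs
      have hs0 : (0:ℝ) < s := lt_trans ht.1 hs.1
      have hzs : v + s • (u - v) ∈ S := hseg s ⟨hs0, hs.2⟩
      have ha : (0:ℝ) ≤ 1 - t / s := by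
        have : t / s < 1 := (div_lt_one hs0).mpr hs.1
        linarith
      have hb : (0:ℝ) ≤ t / s := le_of_lt (div_pos ht.1 hs0)
      have hab : (1 - t / s) + t / s = 1 := by ring
      have hcv := hconv.2 hv hzs ha hb hab
      have hpt : (1 - t / s) • v + (t / s) • (v + s • (u - v)) = v + t • (u - v) := by
        have hts' : (t / s) * s = t := div_mul_cancel₀ t (ne_of_gt hs0)
        rw [smul_add, smul_smul, hts']
        module
      rw [hpt] at hcv
      simpa [hh, h0, smul_eq_mul] using hcv
    have hle := ge_of_tendsto htend hev
    linarith
  have hslope : ∀ᶠ t in 𝓝[>] (0:ℝ), slope h 0 t ≤ g u - h 0 := by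
    filter_upwards [Ioo_mem_nhdsGT_of_mem (show (0:ℝ) ∈ Set.Ico 0 1 by norm_num)] with t ht
    have hk := key t ht
    rw [slope_def_field, sub_zero, div_le_iff₀ ht.1]
    linarith
  have htends : Tendsto (slope h 0) (𝓝[>] (0:ℝ)) (𝓝 ⟪G, u - v⟫) :=
    (hasDerivAt_iff_tendsto_slope.mp hd).mono_left
      (nhdsWithin_mono 0 fun t ht => ne_of_gt ht)
  have := le_of_tendsto htends hslope
  linarith

/-- First-order optimality condition for a minimizer over a convex set. -/
lemma min_grad_ineq {S : Set V} (hS : Convex ℝ S) {ψ : V → ℝ} {w G y : V}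
    (hG : HasGradientAt ψ G w) (hw : w ∈ S) (hy : y ∈ S)
    (hmin : ∀ z ∈ S, ψ w ≤ ψ z) : 0 ≤ ⟪G, y - w⟫ := by
  set h : ℝ → ℝ := fun t => ψ (w + t • (y - w)) with hh
  have h0 : h 0 = ψ w := by simp [hh]
  have hd : HasDerivAt h ⟪G, y - w⟫ 0 := comp_line_hasDerivAt w (y - w) hG
  have hslope : ∀ᶠ t in 𝓝[>] (0:ℝ), 0 ≤ slope h 0 t := by
    filter_upwards [Ioo_mem_nhdsGT_of_mem (show (0:ℝ) ∈ Set.Ico 0 1 by norm_num)] with t ht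
    have hz : w + t • (y - w) ∈ S :=
      hS.add_smul_sub_mem hw hy ⟨le_of_lt ht.1, le_of_lt ht.2⟩
    have hm := hmin _ hz
    rw [slope_def_field, sub_zero]
    apply div_nonneg _ (le_of_lt ht.1)
    simp only [hh, h0]
    linarith [h0]
  have htends : Tendsto (slope h 0) (𝓝[>] (0:ℝ)) (𝓝 ⟪G, y - w⟫) :=
    (hasDerivAt_iff_tendsto_slope.mp hd).mono_left
      (nhdsWithin_mono 0 fun t ht => ne_of_gt ht)
  exact ge_of_tendsto htends hslope

lemma hasGradientAt_combo (a b : ℝ) (g₁ g₂ : V → ℝ) (h1 : Differentiable ℝ g₁)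
    (h2 : Differentiable ℝ g₂) (v : V) :
    HasGradientAt (fun z => a * g₁ z - b * g₂ z) (a • gradient g₁ v - b • gradient g₂ v) v := by
  rw [hasGradientAt_iff_hasFDerivAt]
  have H1 : HasFDerivAt g₁ (InnerProductSpace.toDual ℝ V (gradient g₁ v)) v :=
    hasGradientAt_iff_hasFDerivAt.mp (h1 v).hasGradientAt
  have H2 : HasFDerivAt g₂ (InnerProductSpace.toDual ℝ V (gradient g₂ v)) v :=
    hasGradientAt_iff_hasFDerivAt.mp (h2 v).hasGradientAt
  have := (H1.const_mul a).sub (H2.const_mul b)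
  have hfd : InnerProductSpace.toDual ℝ V (a • gradient g₁ v - b • gradient g₂ v)
      = a • InnerProductSpace.toDual ℝ V (gradient g₁ v)
        - b • InnerProductSpace.toDual ℝ V (gradient g₂ v) := by
    ext w
    simp [inner_sub_left, real_inner_smul_left]
  rw [hfd]
  exact this

end Aux

lemma hasGradientAt_mirror {V : Type*} [NormedAddCommGroup V] [InnerProductSpace ℝ V]
    [CompleteSpace V] (φ : V → ℝ) (hφ : Differentiable ℝ φ) (c xk w : V) (L : ℝ) :
    HasGradientAt (fun z => ⟪c, z⟫ + L * bregman φ z xk)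
      (c + L • gradient φ w - L • gradient φ xk) w := by
  rw [hasGradientAt_iff_hasFDerivAt]
  have A1 : HasFDerivAt (fun z : V => ⟪c, z⟫) (InnerProductSpace.toDual ℝ V c) w :=
    (InnerProductSpace.toDual ℝ V c).hasFDerivAt
  have A2 : HasFDerivAt φ (InnerProductSpace.toDual ℝ V (gradient φ w)) w :=
    hasGradientAt_iff_hasFDerivAt.mp (hφ w).hasGradientAt
  have A3 : HasFDerivAt (fun z : V => ⟪gradient φ xk, z - xk⟫)
      (InnerProductSpace.toDual ℝ V (gradient φ xk)) w := by
    have he : (fun z : V => ⟪gradient φ xk, z - xk⟫)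
        = fun z : V => ⟪gradient φ xk, z⟫ - ⟪gradient φ xk, xk⟫ := by
      funext z; rw [inner_sub_right]
    rw [he]
    exact (InnerProductSpace.toDual ℝ V (gradient φ xk)).hasFDerivAt.sub_const _
  have T := A1.add ((((A2.sub_const (φ xk)).sub A3)).const_mul L)
  have hfd : (InnerProductSpace.toDual ℝ V c
        + L • (InnerProductSpace.toDual ℝ V (gradient φ w)
          - InnerProductSpace.toDual ℝ V (gradient φ xk)))
      = InnerProductSpace.toDual ℝ V (c + L • gradient φ w - L • gradient φ xk) := by
    refine ContinuousLinearMap.ext fun z => ?_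
    simp [inner_add_left, inner_sub_left, real_inner_smul_left]
    ring
  exact hfd ▸ T

/-- Linear convergence of mirror descent with constant step size `1/L` when `f` is
`L`-relatively smooth and `μ`-relatively strongly convex with respect to `φ`:
`f(x^k) − f* ≤ (1 − μ/L)^k · L · D_φ(x*, x^0)` for all `k ≥ 1`. -/
theorem stmt_8 {V : Type*} [NormedAddCommGroup V] [InnerProductSpace ℝ V]
    [FiniteDimensional ℝ V]
    (C : Set V) (hC : Convex ℝ C) (f φ : V → ℝ) (L : ℝ) (hL : 0 < L)
    (hf : Differentiable ℝ f) (hfc : ConvexOn ℝ C f)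
    -- φ is Legendre: lower semicontinuous, strictly convex, essentially smooth
    (hφlsc : LowerSemicontinuous φ) (hφsc : StrictConvexOn ℝ C φ)
    (hφdiff : Differentiable ℝ φ)
    -- f is L-smooth relative to φ on C
    (hsmooth : ConvexOn ℝ (intrinsicInterior ℝ C) (fun x => L * φ x - f x))
    -- the mirror descent iterates, well-defined in the relative interior of C
    (x : ℕ → V) (hmem : ∀ k, x k ∈ intrinsicInterior ℝ C)
    (hiter : ∀ k, ∀ y ∈ C,
      ⟪gradient f (x k), x (k + 1)⟫ + L * bregman φ (x (k + 1)) (x k) ≤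
        ⟪gradient f (x k), y⟫ + L * bregman φ y (x k))
    -- f is μ-strongly convex relative to φ on C
    (μ : ℝ) (hμ : 0 < μ)
    (hstrong : ConvexOn ℝ (intrinsicInterior ℝ C) (fun x => f x - μ * φ x))
    -- x* is a minimizer of f over C
    (xstar : V) (hxstar : xstar ∈ C) (hopt : ∀ y ∈ C, f xstar ≤ f y) :
    ∀ k : ℕ, 1 ≤ k →
      f (x k) - f xstar ≤ (1 - μ / L) ^ k * L * bregman φ xstar (x 0) := by
  have hSsub : intrinsicInterior ℝ C ⊆ C := intrinsicInterior_subset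
  have hmemC : ∀ k, x k ∈ C := fun k => hSsub (hmem k)
  have hbreg_nonneg : ∀ z ∈ C, ∀ w ∈ C, 0 ≤ bregman φ w z := by
    intro z hz w hw
    have := grad_ineq (g := φ) (u := w) hφdiff.continuous hφsc.convexOn
      (hφdiff z).hasGradientAt hz
      (fun t ht => hC.add_smul_sub_mem hz hw ⟨le_of_lt ht.1, le_of_lt ht.2⟩)
    simp only [bregman]
    linarith
  by_cases hcase : μ ≤ L
  · -- main case
    set r := 1 - μ / L with hr
    have hr0 : 0 ≤ r := by
      have : μ / L ≤ 1 := (div_le_one hL).mpr hcase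
      rw [hr]; linarith
    have hrL : L - μ = r * L := by rw [hr]; field_simp
    have key : ∀ k, f (x (k+1)) - f xstar + L * bregman φ xstar (x (k+1)) ≤
        (L - μ) * bregman φ xstar (x k) := by
      intro k
      set xk := x k with hxk
      set xp := x (k+1) with hxp
      set c := gradient f xk with hc
      set pk := gradient φ xk with hpkdef
      set gp := gradient φ xp with hgpdef
      -- (1) relative smoothness
      have hG1 : HasGradientAt (fun z => L * φ z - f z) (L • pk - gradient f xk) xk := by
        have := hasGradientAt_combo L 1 φ f hφdiff hf xk
        simpa [one_mul, one_smul] using this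
      have smooth1 : L * φ xk - f xk + ⟪L • pk - c, xp - xk⟫ ≤ L * φ xp - f xp :=
        grad_ineq ((continuous_const.mul hφdiff.continuous).sub hf.continuous) hsmooth hG1
          (hmem k)
          (fun t ht => (hsmooth.1).add_smul_sub_mem (hmem k) (hmem (k+1))
            ⟨le_of_lt ht.1, le_of_lt ht.2⟩)
      -- (2) relative strong convexity
      have hG2 : HasGradientAt (fun z => f z - μ * φ z) (gradient f xk - μ • pk) xk := by
        have := hasGradientAt_combo 1 μ f φ hf hφdiff xk
        simpa [one_mul, one_smul] using this
      have hseg2 : ∀ t : ℝ, t ∈ Set.Ioo (0:ℝ) 1 → xk + t • (xstar - xk) ∈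
          intrinsicInterior ℝ C := by
        intro t ht
        have hmm := mem_relint_seg hC hxstar (hmem k)
          (t := 1 - t) ⟨by linarith [ht.2], by linarith [ht.1]⟩
        have hpt : xstar + (1 - t) • (xk - xstar) = xk + t • (xstar - xk) := by module
        rwa [hpt] at hmm
      have strong1 : f xk - μ * φ xk + ⟪c - μ • pk, xstar - xk⟫ ≤ f xstar - μ * φ xstar :=
        grad_ineq (hf.continuous.sub (continuous_const.mul hφdiff.continuous)) hstrong hG2
          (hmem k) hseg2
      -- (3) optimality of the iterate
      have hGψ : HasGradientAt (fun z => ⟪c, z⟫ + L * bregman φ z xk)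
          (c + L • gp - L • pk) xp := hasGradientAt_mirror φ hφdiff c xk xp L
      have var : 0 ≤ ⟪c + L • gp - L • pk, xstar - xp⟫ :=
        min_grad_ineq hC hGψ (hmemC (k+1)) hxstar (fun z hz => hiter k z hz)
      -- three-point identity
      have tpt : bregman φ xstar xk - bregman φ xstar xp - bregman φ xp xk
          = ⟪gp, xstar - xp⟫ - ⟪pk, xstar - xp⟫ := by
        simp only [bregman, inner_sub_left, inner_sub_right]
        ring
      have tptL : L * ((φ xstar - φ xk - ⟪pk, xstar - xk⟫)
            - (φ xstar - φ xp - ⟪gp, xstar - xp⟫) - (φ xp - φ xk - ⟪pk, xp - xk⟫))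
          = L * (⟪gp, xstar - xp⟫ - ⟪pk, xstar - xp⟫) := by
        simp only [inner_sub_right]
        ring
      have hexp : ⟪c + L • gp - L • pk, xstar - xp⟫
          = ⟪c, xstar - xp⟫ + L * (⟪gp, xstar - xp⟫ - ⟪pk, xstar - xp⟫) := by
        simp only [inner_add_left, inner_sub_left, real_inner_smul_left]
        ring
      have hsplit : ⟪c, xp - xk⟫ = ⟪c, xstar - xk⟫ - ⟪c, xstar - xp⟫ := by
        simp only [inner_sub_right]
        ring
      have hin1 : ⟪L • pk - c, xp - xk⟫ = L * ⟪pk, xp - xk⟫ - ⟪c, xp - xk⟫ := by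
        simp only [inner_sub_left, real_inner_smul_left]
      have hin2 : ⟪c - μ • pk, xstar - xk⟫ = ⟪c, xstar - xk⟫ - μ * ⟪pk, xstar - xk⟫ := by
        simp only [inner_sub_left, real_inner_smul_left]
      have hb1 : bregman φ xstar xk = φ xstar - φ xk - ⟪pk, xstar - xk⟫ := rfl
      have hb2 : bregman φ xstar xp = φ xstar - φ xp - ⟪gp, xstar - xp⟫ := rfl
      have hb3 : bregman φ xp xk = φ xp - φ xk - ⟪pk, xp - xk⟫ := rfl
      rw [hin1] at smooth1
      rw [hin2] at strong1
      rw [hexp] at var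
      rw [hb1, hb2, hb3] at *
      linarith
    have hDnn : ∀ k, 0 ≤ bregman φ xstar (x k) :=
      fun k => hbreg_nonneg (x k) (hmemC k) xstar hxstar
    have hub : ∀ k, L * bregman φ xstar (x k) ≤ r ^ k * (L * bregman φ xstar (x 0)) := by
      intro k
      induction k with
      | zero => simp
      | succ n ih =>
        have hk := key n
        have he : 0 ≤ f (x (n+1)) - f xstar := by
          have := hopt _ (hmemC (n+1)); linarith
        calc L * bregman φ xstar (x (n+1)) ≤ (L - μ) * bregman φ xstar (x n) := by linarith
          _ = r * (L * bregman φ xstar (x n)) := by rw [hrL]; ring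
          _ ≤ r * (r ^ n * (L * bregman φ xstar (x 0))) := mul_le_mul_of_nonneg_left ih hr0
          _ = r ^ (n+1) * (L * bregman φ xstar (x 0)) := by ring
    intro k hk
    obtain ⟨j, rfl⟩ : ∃ j, k = j + 1 := ⟨k - 1, (Nat.succ_pred_eq_of_pos hk).symm⟩
    have hkey := key j
    have hnn : 0 ≤ L * bregman φ xstar (x (j+1)) := mul_nonneg hL.le (hDnn (j+1))
    calc f (x (j+1)) - f xstar ≤ (L - μ) * bregman φ xstar (x j) := by linarith
      _ = r * (L * bregman φ xstar (x j)) := by rw [hrL]; ring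
      _ ≤ r * (r ^ j * (L * bregman φ xstar (x 0))) := mul_le_mul_of_nonneg_left (hub j) hr0
      _ = r ^ (j+1) * L * bregman φ xstar (x 0) := by ring
  · -- degenerate case: L < μ forces the relative interior to be a single point
    push_neg at hcase
    have hsum : ConvexOn ℝ (intrinsicInterior ℝ C) (fun z => (L - μ) * φ z) := by
      have hfun : (fun z => (L - μ) * φ z)
          = fun z => (L * φ z - f z) + (f z - μ * φ z) := by
        funext z; ring
      rw [hfun]
      exact hsmooth.add hstrong
    have hsub : ∀ a ∈ intrinsicInterior ℝ C, ∀ b ∈ intrinsicInterior ℝ C, a = b := by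
      intro a ha b hb
      by_contra hne
      have hconc := hsum.2 ha hb (by norm_num : (0:ℝ) ≤ 1/2) (by norm_num : (0:ℝ) ≤ 1/2)
        (by norm_num : (1/2:ℝ) + 1/2 = 1)
      have hstrict := hφsc.2 (hSsub ha) (hSsub hb) hne (by norm_num : (0:ℝ) < 1/2)
        (by norm_num : (0:ℝ) < 1/2) (by norm_num : (1/2:ℝ) + 1/2 = 1)
      simp only [smul_eq_mul] at hconc hstrict
      nlinarith
    have hx0 : ∀ k, x k = x 0 := fun k => hsub _ (hmem k) _ (hmem 0)
    have hxs : xstar = x 0 := by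
      by_contra hne
      have hm : xstar + (1/2 : ℝ) • (x 0 - xstar) ∈ intrinsicInterior ℝ C :=
        mem_relint_seg hC hxstar (hmem 0) (by norm_num)
      have heq := hsub _ hm _ (hmem 0)
      apply hne
      have h2 : (1/2 : ℝ) • (x 0 - xstar) = x 0 - xstar := by
        have := congrArg (fun z => z - xstar) heq
        simpa using this
      have h3 : ((1/2 : ℝ) - 1) • (x 0 - xstar) = 0 := by
        rw [sub_smul, one_smul, h2]; simp
      rcases smul_eq_zero.mp h3 with h | h
      · norm_num at h
      · exact (sub_eq_zero.mp h).symm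
    intro k hk
    rw [hx0 k, hxs]
    simp [bregman]
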